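/- arXiv:2408.08511 — 8 statements merged into one kernel-verified Lean document; each statement's English description precedes it below -/
import Mathlib

section
/- Suppose dom Λ is closed and Λ is continuous on dom Λ. Then for every α ∈ ℝ, λ ∈ (0,1), and every ℝ^d-valued random vector X, the set R_{α,λ}(X) := {z ∈ ℝ^g : ℙ(Λ(X + Bᵀz) < α) ≤ λ and ℙ(X + Bᵀz ∈ dom Λ) = 1} is closed in ℝ^g. -/
open MeasureTheory

/-- If `dom Λ` is nonempty and closed and `Λ` is continuous on `dom Λ`, then the sensitive
systemic value-at-risk `R_{α,λ}(X) = {z | ℙ(Λ(X + Bᵀz) < α) ≤ λ, ℙ(X + Bᵀz ∈ dom Λ) = 1}`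
is a closed subset of `ℝ^g`. -/
theorem stmt7 {Ω : Type*} [MeasurableSpace Ω] (P : Measure Ω) [IsProbabilityMeasure P]
    {d g : ℕ} (Λ : (Fin d → ℝ) → WithBot ℝ)
    (hdom_ne : {x : Fin d → ℝ | Λ x ≠ ⊥}.Nonempty)
    (hdom_closed : IsClosed {x : Fin d → ℝ | Λ x ≠ ⊥})
    (hcont : ContinuousOn (fun x => (Λ x).unbotD 0) {x : Fin d → ℝ | Λ x ≠ ⊥})
    (B : Matrix (Fin g) (Fin d) ℝ)
    (hB01 : ∀ j i, B j i = 0 ∨ B j i = 1)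
    (hBcol : ∀ i, ∃! j, B j i = 1)
    (X : Ω → Fin d → ℝ) (hX : Measurable X)
    (α lam : ℝ) (hlam0 : 0 < lam) (hlam1 : lam < 1) :
    IsClosed {z : Fin g → ℝ |
      P {ω | Λ (X ω + B.transpose.mulVec z) < (α : WithBot ℝ)} ≤ ENNReal.ofReal lam ∧
      P {ω | X ω + B.transpose.mulVec z ∈ {x : Fin d → ℝ | Λ x ≠ ⊥}} = 1} := by
  set dom : Set (Fin d → ℝ) := {x | Λ x ≠ ⊥} with hdom
  set gfun : (Fin d → ℝ) → ℝ := fun x => (Λ x).unbotD 0 with hg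
  -- T : continuous linear map
  have hT : Continuous fun z : Fin g → ℝ => B.transpose.mulVec z := by
    exact (Matrix.mulVecLin B.transpose).continuous_of_finiteDimensional
  -- M is measurable
  obtain ⟨v, hvopen, hveq⟩ := (continuousOn_iff'.mp hcont) (Set.Iio α) isOpen_Iio
  set M : Set (Fin d → ℝ) := {x | Λ x < (α : WithBot ℝ)} with hM
  have hMeq : M = domᶜ ∪ (v ∩ dom) := by
    ext x
    by_cases hx : Λ x = ⊥
    · simp [hM, hx, hdom, WithBot.bot_lt_coe]
    · obtain ⟨r, hr⟩ := WithBot.ne_bot_iff_exists.mp hx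
      have hxd : x ∈ dom := hx
      have h1 : x ∈ M ↔ r < α := by
        simp [hM, ← hr, WithBot.coe_lt_coe]
      have h2 : x ∈ v ↔ gfun x < α := by
        constructor
        · intro hv
          have : x ∈ (fun x => (Λ x).unbotD 0) ⁻¹' Set.Iio α ∩ dom := by
            rw [hveq]; exact ⟨hv, hxd⟩
          exact this.1
        · intro hlt
          have : x ∈ v ∩ dom := by
            rw [← hveq]; exact ⟨hlt, hxd⟩
          exact this.1
      have h3 : gfun x = r := by simp [hg, ← hr]
      simp only [Set.mem_union, Set.mem_compl_iff, Set.mem_inter_iff]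
      rw [h1, h2, h3]
      simp [hxd, hdom, hx]
  have hMmeas : MeasurableSet M := by
    rw [hMeq]
    exact (hdom_closed.measurableSet.compl).union
      (hvopen.measurableSet.inter hdom_closed.measurableSet)
  have hdomMeas : MeasurableSet dom := hdom_closed.measurableSet
  -- measurability of ω ↦ X ω + c
  have hXc : ∀ c : Fin d → ℝ, Measurable fun ω => X ω + c := fun c =>
    hX.add measurable_const
  -- sequential closedness
  apply IsSeqClosed.isClosed
  intro u z hu hz
  have hTz : Filter.Tendsto (fun n => B.transpose.mulVec (u n)) Filter.atTop
      (nhds (B.transpose.mulVec z)) := (hT.tendsto z).comp hz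
  -- a.e. membership for each n
  have hDae : ∀ n, ∀ᵐ ω ∂P, X ω + B.transpose.mulVec (u n) ∈ dom := by
    intro n
    have h1 := (hu n).2
    have hms : MeasurableSet {ω | X ω + B.transpose.mulVec (u n) ∈ dom} :=
      (hXc _) hdomMeas
    rw [← prob_compl_eq_zero_iff hms] at h1
    exact h1
  have hGae : ∀ᵐ ω ∂P, ∀ n, X ω + B.transpose.mulVec (u n) ∈ dom :=
    MeasureTheory.ae_all_iff.mpr hDae
  -- limit membership a.e.
  have hlimdom : ∀ᵐ ω ∂P, X ω + B.transpose.mulVec z ∈ dom := by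
    filter_upwards [hGae] with ω hω
    have htend : Filter.Tendsto (fun n => X ω + B.transpose.mulVec (u n))
        Filter.atTop (nhds (X ω + B.transpose.mulVec z)) :=
      tendsto_const_nhds.add hTz
    exact hdom_closed.mem_of_tendsto htend (Filter.Eventually.of_forall hω)
  constructor
  · -- the probability bound
    set A : ℕ → Set Ω := fun n => {ω | X ω + B.transpose.mulVec (u n) ∈ M} with hA
    have hAmeas : ∀ n, MeasurableSet (A n) := fun n => (hXc _) hMmeas
    have hAle : ∀ n, P (A n) ≤ ENNReal.ofReal lam := fun n => (hu n).1
    set C : ℕ → Set Ω := fun N => ⋂ n, A (N + n) with hC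
    have hCmeas : ∀ N, MeasurableSet (C N) := fun N =>
      MeasurableSet.iInter fun n => hAmeas _
    have hCmono : Monotone C := by
      intro N M' hNM ω hω
      simp only [hC, Set.mem_iInter] at hω ⊢
      intro n
      have : M' + n = N + (M' - N + n) := by omega
      rw [this]; exact hω _
    have hCle : ∀ N, P (C N) ≤ ENNReal.ofReal lam := by
      intro N
      calc P (C N) ≤ P (A (N + 0)) := measure_mono (Set.iInter_subset _ 0)
        _ ≤ ENNReal.ofReal lam := hAle _
    -- a.e. inclusion of limit set in ⋃ C N
    have hincl : ∀ᵐ ω ∂P, ω ∈ {ω | Λ (X ω + B.transpose.mulVec z) < (α : WithBot ℝ)}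
        → ω ∈ ⋃ N, C N := by
      filter_upwards [hGae, hlimdom] with ω hω hωz hmem
      -- Λ (X ω + Bᵀz) < α and X ω + Bᵀz ∈ dom
      set y : Fin d → ℝ := X ω + B.transpose.mulVec z with hy
      set yn : ℕ → Fin d → ℝ := fun n => X ω + B.transpose.mulVec (u n) with hyn
      have htendy : Filter.Tendsto yn Filter.atTop (nhds y) :=
        tendsto_const_nhds.add hTz
      have htendy' : Filter.Tendsto yn Filter.atTop (nhdsWithin y dom) := by
        rw [tendsto_nhdsWithin_iff]
        exact ⟨htendy, Filter.Eventually.of_forall hω⟩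
      have hgy : gfun y < α := by
        obtain ⟨r, hr⟩ := WithBot.ne_bot_iff_exists.mp hωz
        have : (r : WithBot ℝ) < (α : WithBot ℝ) := by rw [hr]; exact hmem
        have hra : r < α := WithBot.coe_lt_coe.mp this
        simpa [hg, ← hr] using hra
      have htg : Filter.Tendsto (fun n => gfun (yn n)) Filter.atTop (nhds (gfun y)) :=
        ((hcont y hωz).tendsto.comp htendy')
      have hev : ∀ᶠ n in Filter.atTop, gfun (yn n) < α :=
        htg.eventually_lt_const hgy
      obtain ⟨N, hN⟩ := Filter.eventually_atTop.mp hev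
      refine Set.mem_iUnion.mpr ⟨N, ?_⟩
      simp only [hC, Set.mem_iInter]
      intro n
      have hn : gfun (yn (N + n)) < α := hN _ (Nat.le_add_right N n)
      have hd : yn (N + n) ∈ dom := hω _
      show yn (N + n) ∈ M
      obtain ⟨r, hr⟩ := WithBot.ne_bot_iff_exists.mp hd
      have : gfun (yn (N + n)) = r := by simp [hg, ← hr]
      rw [this] at hn
      show Λ (yn (N + n)) < (α : WithBot ℝ)
      rw [← hr]
      exact WithBot.coe_lt_coe.mpr hn
    have step1 : P {ω | Λ (X ω + B.transpose.mulVec z) < (α : WithBot ℝ)}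
        ≤ P (⋃ N, C N) := by
      apply measure_mono_ae
      exact hincl
    have step2 : P (⋃ N, C N) = ⨆ N, P (C N) :=
      (hCmono.directed_le).measure_iUnion
    calc P {ω | Λ (X ω + B.transpose.mulVec z) < (α : WithBot ℝ)}
        ≤ P (⋃ N, C N) := step1
      _ = ⨆ N, P (C N) := step2
      _ ≤ ENNReal.ofReal lam := iSup_le hCle
  · -- the full-measure condition
    have hms : MeasurableSet {ω | X ω + B.transpose.mulVec z ∈ dom} :=
      (hXc _) hdomMeas
    rw [← prob_compl_eq_zero_iff hms]
    exact hlimdom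
end

section
/- If dom Λ ⊆ x^LB + ℝ^d₊ for some x^LB ∈ ℝ^d (dom Λ is bounded below with respect to the componentwise order), and X is an ℝ^d-valued random vector with ℙ(X ∈ dom Λ) = 1, then the set R_{α,λ}(X) = {z ∈ ℝ^g : ℙ(Λ(X + Bᵀz) < α) ≤ λ, ℙ(X + Bᵀz ∈ dom Λ) = 1} is bounded below with respect to ℝ^g₊: there exists z^LB ∈ ℝ^g with R_{α,λ}(X) ⊆ z^LB + ℝ^g₊. -/
open MeasureTheory

/-- If `dom Λ ⊆ x^LB + ℝ^d₊` and `ℙ(X ∈ dom Λ) = 1`, then the sensitive systemic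
value-at-risk `R_{α,λ}(X)` is bounded below with respect to `ℝ^g₊`: there exists
`z^LB ∈ ℝ^g` with `R_{α,λ}(X) ⊆ z^LB + ℝ^g₊`. -/
theorem stmt9 {Ω : Type*} [MeasurableSpace Ω] (P : Measure Ω) [IsProbabilityMeasure P]
    {d g : ℕ} (Λ : (Fin d → ℝ) → WithBot ℝ) (hΛ : Monotone Λ)
    (hdom_closed : IsClosed {x : Fin d → ℝ | Λ x ≠ ⊥})
    (xLB : Fin d → ℝ) (hdom : ∀ x : Fin d → ℝ, Λ x ≠ ⊥ → xLB ≤ x)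
    (B : Matrix (Fin g) (Fin d) ℝ)
    (hB01 : ∀ j i, B j i = 0 ∨ B j i = 1)
    (hBcol : ∀ i, ∃! j, B j i = 1)
    (hBrow : ∀ j, ∃ i, B j i = 1)
    (X : Ω → Fin d → ℝ) (hX : Measurable X)
    (hXdom : ∀ᵐ ω ∂P, Λ (X ω) ≠ ⊥)
    (α lam : ℝ) (hlam0 : 0 < lam) (hlam1 : lam < 1) :
    ∃ zLB : Fin g → ℝ, ∀ z : Fin g → ℝ,
      (P {ω | Λ (X ω + B.transpose.mulVec z) < (α : WithBot ℝ)} ≤ ENNReal.ofReal lam ∧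
        P {ω | Λ (X ω + B.transpose.mulVec z) ≠ ⊥} = 1) → zLB ≤ z := by
  classical
  choose iofj hiofj using hBrow
  -- find n with positive probability that all coordinates of X are ≤ n
  obtain ⟨n, hn⟩ : ∃ n : ℕ, 0 < P {ω | ∀ i, X ω i ≤ (n : ℝ)} := by
    by_contra h
    push_neg at h
    have h0 : P (⋃ n : ℕ, {ω | ∀ i, X ω i ≤ (n : ℝ)}) = 0 :=
      measure_iUnion_null fun n => le_antisymm (h n) zero_le
    have hu : (⋃ n : ℕ, {ω | ∀ i, X ω i ≤ (n : ℝ)}) = Set.univ := by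
      ext ω
      simp only [Set.mem_iUnion, Set.mem_setOf_eq, Set.mem_univ, iff_true]
      obtain ⟨n, hn⟩ := exists_nat_ge (∑ i, |X ω i|)
      refine ⟨n, fun i => ?_⟩
      refine le_trans (le_abs_self _) (le_trans ?_ hn)
      exact Finset.single_le_sum (f := fun i => |X ω i|)
        (fun i _ => abs_nonneg _) (Finset.mem_univ i)
    rw [hu] at h0
    simp [measure_univ] at h0
  refine ⟨fun j => xLB (iofj j) - n, fun z hz => ?_⟩
  obtain ⟨-, h1⟩ := hz
  set c := B.transpose.mulVec z with hc
  have hSmeas : MeasurableSet {ω | Λ (X ω + c) ≠ ⊥} := by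
    have : {ω | Λ (X ω + c) ≠ ⊥} = (fun ω => X ω + c) ⁻¹' {x | Λ x ≠ ⊥} := rfl
    rw [this]
    exact (hX.add_const c) hdom_closed.measurableSet
  have hcompl : P {ω | Λ (X ω + c) ≠ ⊥}ᶜ = 0 := by
    rw [prob_compl_eq_zero_iff hSmeas]; exact h1
  have hne : ({ω | ∀ i, X ω i ≤ (n : ℝ)} ∩ {ω | Λ (X ω + c) ≠ ⊥}).Nonempty := by
    rw [Set.nonempty_iff_ne_empty]
    intro hemp
    have hsub : {ω | ∀ i, X ω i ≤ (n : ℝ)} ⊆ {ω | Λ (X ω + c) ≠ ⊥}ᶜ := by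
      intro ω hω hωS
      exact Set.eq_empty_iff_forall_notMem.mp hemp ω ⟨hω, hωS⟩
    exact absurd (le_trans (measure_mono hsub) hcompl.le) (not_le.mpr hn)
  obtain ⟨ω, hωA, hωS⟩ := hne
  have hge : xLB ≤ X ω + c := hdom _ hωS
  intro j
  have hci : c (iofj j) = z j := by
    rw [hc]
    simp only [Matrix.mulVec, Matrix.transpose_apply, dotProduct]
    rw [Finset.sum_eq_single j]
    · rw [hiofj j, one_mul]
    · intro j' _ hj'
      rcases hB01 j' (iofj j) with h0 | h1
      · rw [h0, zero_mul]
      · exact absurd ((hBcol (iofj j)).unique h1 (hiofj j)) hj'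
    · intro hj; exact absurd (Finset.mem_univ j) hj
  have := hge (iofj j)
  simp only [Pi.add_apply, hci] at this
  have hXle := hωA (iofj j)
  simp only [Pi.sub_apply]
  linarith
end

section
/- Let A ⊆ ℝ^g be a nonempty closed upper set (A = A + ℝ^g₊) satisfying the Motzkin decomposition A = (A ∩ Z) + ℝ^g₊ with Z := [z^LB, z^UB] a box in ℝ^g. Then for every v ∈ Z, the distance to A equals the distance to A ∩ Z: d(v, A) = d(v, A ∩ Z). -/
open Pointwise

lemma stmt11_aux (w y v : ℝ) (hy : 0 ≤ y) :
    (v - min (w + y) (max w v))^2 ≤ (v - (w + y))^2 := by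
  rcases le_total v w with h | h
  · rw [max_eq_left h, min_eq_right (by linarith)]
    nlinarith
  · rw [max_eq_right h]
    rcases le_total v (w + y) with h2 | h2
    · rw [min_eq_right h2]; simpa using sq_nonneg (v - (w + y))
    · rw [min_eq_left h2]

/-- If `A ⊆ ℝ^g` is a nonempty closed upper set with Motzkin decomposition
`A = (A ∩ Z) + ℝ^g₊` for a box `Z = [z^LB, z^UB]`, then for every `v ∈ Z` the distance
to `A` equals the distance to `A ∩ Z`. -/
theorem stmt11 {g : ℕ} (A : Set (EuclideanSpace ℝ (Fin g)))
    (zLB zUB : EuclideanSpace ℝ (Fin g))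
    (hne : A.Nonempty) (hclosed : IsClosed A)
    (hupper : A + {y : EuclideanSpace ℝ (Fin g) | ∀ j, 0 ≤ y j} = A)
    (hMotzkin : A = (A ∩ {z : EuclideanSpace ℝ (Fin g) | ∀ j, zLB j ≤ z j ∧ z j ≤ zUB j})
        + {y : EuclideanSpace ℝ (Fin g) | ∀ j, 0 ≤ y j})
    (v : EuclideanSpace ℝ (Fin g)) (hv : ∀ j, zLB j ≤ v j ∧ v j ≤ zUB j) :
    Metric.infDist v A =
      Metric.infDist v
        (A ∩ {z : EuclideanSpace ℝ (Fin g) | ∀ j, zLB j ≤ z j ∧ z j ≤ zUB j}) := by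
  set Z : Set (EuclideanSpace ℝ (Fin g)) :=
    {z : EuclideanSpace ℝ (Fin g) | ∀ j, zLB j ≤ z j ∧ z j ≤ zUB j} with hZ
  have key : ∀ a ∈ A, ∃ w' ∈ A ∩ Z, dist v w' ≤ dist v a := by
    intro a ha
    rw [hMotzkin] at ha
    obtain ⟨w, hw, y, hy, rfl⟩ := ha
    set w' : EuclideanSpace ℝ (Fin g) :=
      WithLp.toLp 2 (fun j => min ((w + y) j) (max (w j) (v j)) : Fin g → ℝ) with hw'
    have hw'app : ∀ j, w' j = min (w j + y j) (max (w j) (v j)) := by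
      intro j; simp [hw', PiLp.add_apply]
    have hw'A : w' ∈ A := by
      rw [← hupper]
      refine ⟨w, hw.1, w' - w, ?_, by module⟩
      intro j
      rw [PiLp.sub_apply, hw'app j]
      have h1 : w j ≤ w j + y j := by linarith [hy j]
      have h2 : w j ≤ max (w j) (v j) := le_max_left _ _
      have := le_min h1 h2
      linarith
    have hw'Z : w' ∈ Z := by
      intro j
      rw [hw'app j]
      constructor
      · exact le_min (by linarith [(hw.2 j).1, hy j]) (le_max_of_le_left (hw.2 j).1)
      · exact le_trans (min_le_right _ _) (max_le (hw.2 j).2 (hv j).2)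
    refine ⟨w', ⟨hw'A, hw'Z⟩, ?_⟩
    rw [EuclideanSpace.dist_eq, EuclideanSpace.dist_eq]
    apply Real.sqrt_le_sqrt
    apply Finset.sum_le_sum
    intro j _
    simpa [Real.dist_eq, sq_abs, hw'app, PiLp.add_apply] using
      stmt11_aux (w j) (y j) (v j) (hy j)
  obtain ⟨a0, ha0⟩ := hne
  obtain ⟨w0, hw0, _⟩ := key a0 ha0
  apply le_antisymm
  · exact Metric.infDist_le_infDist_of_subset Set.inter_subset_left ⟨w0, hw0⟩
  · conv_rhs => rw [Metric.infDist_eq_iInf]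
    haveI : Nonempty A := ⟨⟨a0, ha0⟩⟩
    apply le_ciInf
    rintro ⟨a, ha⟩
    obtain ⟨w', hw', hd⟩ := key a ha
    exact le_trans (Metric.infDist_le_dist_of_mem hw') hd
end

section
/- Let (π, p̄, x) be an Eisenberg–Noe network and f : ℝ^d → ℝ strictly increasing. If p* maximizes f(p) over the set {p ∈ [0, p̄] : p ≤ πᵀp + x}, then p* is a clearing vector, i.e., for each i either p*ᵢ = p̄ᵢ or p*ᵢ = (πᵀp*)ᵢ + xᵢ. -/
/-- If `p*` maximizes a strictly increasing function `f` over
`{p ∈ [0, p̄] : p ≤ πᵀp + x}`, then `p*` is a clearing vector of the Eisenberg–Noe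
network `(π, p̄, x)`: each component satisfies absolute priority. -/
theorem stmt14 {d : ℕ} (pimat : Matrix (Fin d) (Fin d) ℝ)
    (hpi0 : ∀ i j, 0 ≤ pimat i j) (hpi1 : ∀ i, ∑ j, pimat i j = 1)
    (hpid : ∀ i, pimat i i = 0)
    (pbar : Fin d → ℝ) (hpbar : ∀ i, 0 < pbar i)
    (x : Fin d → ℝ) (hx : 0 ≤ x)
    (f : (Fin d → ℝ) → ℝ)
    (hf : ∀ a b : Fin d → ℝ, a ≤ b → a ≠ b → f a < f b)
    (pstar : Fin d → ℝ)
    (hfeas : 0 ≤ pstar ∧ pstar ≤ pbar ∧ pstar ≤ pimat.transpose.mulVec pstar + x)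
    (hopt : ∀ p : Fin d → ℝ, 0 ≤ p → p ≤ pbar → p ≤ pimat.transpose.mulVec p + x →
      f p ≤ f pstar) :
    ∀ i, pstar i = pbar i ∨ pstar i = pimat.transpose.mulVec pstar i + x i := by
  obtain ⟨h0, hub, hliab⟩ := hfeas
  intro i
  by_contra hcon
  push_neg at hcon
  obtain ⟨h1, h2⟩ := hcon
  have hlt1 : pstar i < pbar i := lt_of_le_of_ne (hub i) h1
  have hlt2 : pstar i < pimat.transpose.mulVec pstar i + x i :=
    lt_of_le_of_ne (hliab i) h2
  set ε := min (pbar i - pstar i) (pimat.transpose.mulVec pstar i + x i - pstar i) with hε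
  have hεpos : 0 < ε := lt_min (by linarith) (by linarith)
  set p := Function.update pstar i (pstar i + ε) with hp
  have hple : pstar ≤ p := by
    intro j
    by_cases hji : j = i
    · subst hji; simp [hp]; linarith
    · simp [hp, Function.update_of_ne hji]
  have hpne : pstar ≠ p := by
    intro h
    have := congrFun h i
    simp [hp] at this
    linarith
  have hmono : pimat.transpose.mulVec pstar ≤ pimat.transpose.mulVec p := by
    intro j
    simp only [Matrix.mulVec, dotProduct, Matrix.transpose_apply]
    exact Finset.sum_le_sum fun k _ => mul_le_mul_of_nonneg_left (hple k) (hpi0 k j)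
  have hfp : f pstar < f p := hf _ _ hple hpne
  have h0p : 0 ≤ p := le_trans h0 hple
  have hubp : p ≤ pbar := by
    intro j
    by_cases hji : j = i
    · subst hji
      simp only [hp, Function.update_self]
      have : ε ≤ pbar j - pstar j := min_le_left _ _
      linarith
    · simp only [hp, Function.update_of_ne hji]; exact hub j
  have hliabp : p ≤ pimat.transpose.mulVec p + x := by
    intro j
    by_cases hji : j = i
    · subst hji
      simp only [hp, Function.update_self, Pi.add_apply]
      have h3 : ε ≤ pimat.transpose.mulVec pstar j + x j - pstar j := min_le_right _ _
      have := hmono j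
      linarith
    · simp only [hp, Function.update_of_ne hji]
      calc pstar j ≤ pimat.transpose.mulVec pstar j + x j := hliab j
        _ ≤ pimat.transpose.mulVec p j + x j := by have := hmono j; linarith
  exact absurd (hopt p h0p hubp hliabp) (not_le.mpr hfp)
end

section
/- The set C(x) of all clearing vectors of an Eisenberg–Noe network (π, p̄, x) admits the mixed-integer characterization C(x) = {p ∈ [0, p̄] : p ≤ x + πᵀp, and there exists y ∈ {0,1}^d with p ≥ p̄ ⊙ y and p ≥ x + πᵀp − Q·y}, where ⊙ denotes componentwise product and Q ≥ max_i((πᵀp̄)ᵢ + xᵢ) is any sufficiently large constant. -/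
/-- Mixed-integer characterization of the set of all clearing vectors of an Eisenberg–Noe
network: `C(x) = {p ∈ [0, p̄] : p ≤ x + πᵀp, ∃ y ∈ {0,1}^d, p ≥ p̄ ⊙ y and
p ≥ x + πᵀp − Q·y}` for any `Q ≥ max_i ((πᵀp̄)ᵢ + xᵢ)`. -/
theorem stmt15 {d : ℕ} (pimat : Matrix (Fin d) (Fin d) ℝ)
    (hpi0 : ∀ i j, 0 ≤ pimat i j) (hpi1 : ∀ i, ∑ j, pimat i j = 1)
    (hpid : ∀ i, pimat i i = 0)
    (pbar : Fin d → ℝ) (hpbar : ∀ i, 0 < pbar i)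
    (x : Fin d → ℝ) (hx : 0 ≤ x)
    (Q : ℝ) (hQ : ∀ i, pimat.transpose.mulVec pbar i + x i ≤ Q) :
    {p : Fin d → ℝ | 0 ≤ p ∧ p ≤ pbar ∧ p ≤ pimat.transpose.mulVec p + x ∧
        ∀ i, p i = pbar i ∨ p i = pimat.transpose.mulVec p i + x i} =
    {p : Fin d → ℝ | 0 ≤ p ∧ p ≤ pbar ∧
        (∀ i, p i ≤ x i + pimat.transpose.mulVec p i) ∧
        ∃ y : Fin d → ℝ, (∀ i, y i = 0 ∨ y i = 1) ∧
          (∀ i, pbar i * y i ≤ p i) ∧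
          (∀ i, x i + pimat.transpose.mulVec p i - Q * y i ≤ p i)} := by
  ext p
  simp only [Set.mem_setOf_eq]
  constructor
  · rintro ⟨h0, hub, hle, hfix⟩
    have hmul : ∀ i, pimat.transpose.mulVec p i ≤ pimat.transpose.mulVec pbar i := by
      intro i
      simp only [Matrix.mulVec, dotProduct, Matrix.transpose_apply]
      apply Finset.sum_le_sum
      intro j _
      exact mul_le_mul_of_nonneg_left (hub j) (hpi0 j i)
    refine ⟨h0, hub, fun i => by have := hle i; simp [Pi.add_apply] at this; linarith, 
      fun i => if p i = pbar i then 1 else 0, fun i => by by_cases h : p i = pbar i <;> simp [h],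
      fun i => ?_, fun i => ?_⟩
    · by_cases h : p i = pbar i <;> simp [h]
      exact h0 i
    · by_cases h : p i = pbar i <;> simp [h]
      · have := hmul i; have := hQ i; have := hpbar i; linarith
      · rcases hfix i with h' | h'
        · exact absurd h' h
        · linarith [h'.ge]
  · rintro ⟨h0, hub, hle, y, hy01, hy1, hy2⟩
    refine ⟨h0, hub, fun i => by have := hle i; simp [Pi.add_apply]; linarith, fun i => ?_⟩
    rcases hy01 i with h | h
    · right
      have := hy2 i
      rw [h] at this
      have := hle i
      linarith
    · left
      have := hy1 i
      rw [h, mul_one] at this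
      linarith [hub i]
end

section
/- For the Eisenberg–Noe aggregation Λ^EN and any x ∈ ℝ^d₊, evaluating at x shifted by |p̄|₂ in every coordinate yields the maximal value: Λ^EN(x + |p̄|₂·1) = 1ᵀp̄, with unique optimal solution p = p̄. Consequently, with α ≤ 1ᵀp̄ and any λ ∈ (0,1), the vector z = |p̄|₂·1_g belongs to R^EN_{α,λ}(X) for every X ∈ L⁰(ℝ^d₊); in particular R^EN_{α,λ}(X) ≠ ∅ if and only if α ≤ 1ᵀp̄. -/
open MeasureTheory Classical

/-- The Eisenberg–Noe aggregation function on `ℝ^d₊` (real-valued version). -/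
noncomputable def lamEN {d : ℕ} (pimat : Matrix (Fin d) (Fin d) ℝ) (pbar : Fin d → ℝ)
    (x : Fin d → ℝ) : ℝ :=
  sSup ((fun p : Fin d → ℝ => ∑ i, p i) ''
    {p : Fin d → ℝ | 0 ≤ p ∧ p ≤ pbar ∧ p ≤ pimat.transpose.mulVec p + x})

/-- The Eisenberg–Noe aggregation function, with value `−∞` off the nonnegative orthant. -/
noncomputable def lamENb {d : ℕ} (pimat : Matrix (Fin d) (Fin d) ℝ) (pbar : Fin d → ℝ)
    (x : Fin d → ℝ) : WithBot ℝ :=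
  if 0 ≤ x then ((lamEN pimat pbar x : ℝ) : WithBot ℝ) else ⊥

/-- The sensitive systemic value-at-risk for the Eisenberg–Noe model:
`R^EN_{α,λ}(X) = {z | ℙ(Λ^EN(X + Bᵀz) < α) ≤ λ, ℙ(X + Bᵀz ≥ 0) = 1}`. -/
noncomputable def REN {Ω : Type*} [MeasurableSpace Ω] (P : Measure Ω)
    {d g : ℕ} (pimat : Matrix (Fin d) (Fin d) ℝ) (pbar : Fin d → ℝ)
    (B : Matrix (Fin g) (Fin d) ℝ) (X : Ω → Fin d → ℝ) (α lam : ℝ) :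
    Set (Fin g → ℝ) :=
  {z : Fin g → ℝ |
    P {ω | lamENb pimat pbar (X ω + B.transpose.mulVec z) < (α : WithBot ℝ)}
        ≤ ENNReal.ofReal lam ∧
    P {ω | 0 ≤ X ω + B.transpose.mulVec z} = 1}

/-- `Λ^EN(x + |p̄|₂·1) = 1ᵀp̄` for `x ≥ 0`, with unique optimizer `p = p̄`; consequently
`z = |p̄|₂·1_g ∈ R^EN_{α,λ}(X)` when `α ≤ 1ᵀp̄`, and `R^EN_{α,λ}(X) ≠ ∅ ↔ α ≤ 1ᵀp̄`. -/
theorem stmt17 {Ω : Type*} [MeasurableSpace Ω] (P : Measure Ω) [IsProbabilityMeasure P]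
    {d g : ℕ} (pimat : Matrix (Fin d) (Fin d) ℝ)
    (hpi0 : ∀ i j, 0 ≤ pimat i j) (hpi1 : ∀ i, ∑ j, pimat i j = 1)
    (hpid : ∀ i, pimat i i = 0)
    (pbar : Fin d → ℝ) (hpbar : ∀ i, 0 < pbar i)
    (B : Matrix (Fin g) (Fin d) ℝ)
    (hB01 : ∀ j i, B j i = 0 ∨ B j i = 1)
    (hBcol : ∀ i, ∃! j, B j i = 1)
    (X : Ω → Fin d → ℝ) (hX : Measurable X) (hXpos : ∀ᵐ ω ∂P, 0 ≤ X ω)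
    (α lam : ℝ) (hα : 0 < α) (hlam0 : 0 < lam) (hlam1 : lam < 1)
    (c : ℝ) (hc : c = Real.sqrt (∑ i, (pbar i) ^ 2)) :
    (∀ x : Fin d → ℝ, 0 ≤ x →
        lamEN pimat pbar (x + fun _ => c) = ∑ i, pbar i) ∧
    (∀ x : Fin d → ℝ, 0 ≤ x → ∀ p : Fin d → ℝ,
        0 ≤ p → p ≤ pbar → p ≤ pimat.transpose.mulVec p + (x + fun _ => c) →
        ∑ i, p i = ∑ i, pbar i → p = pbar) ∧
    (α ≤ ∑ i, pbar i → (fun _ => c) ∈ REN P pimat pbar B X α lam) ∧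
    ((REN P pimat pbar B X α lam).Nonempty ↔ α ≤ ∑ i, pbar i) := by
  have hc0 : 0 ≤ c := hc ▸ Real.sqrt_nonneg _
  have hcge : ∀ i, pbar i ≤ c := by
    intro i
    rw [hc]
    calc pbar i = Real.sqrt ((pbar i) ^ 2) := (Real.sqrt_sq (hpbar i).le).symm
    _ ≤ _ := Real.sqrt_le_sqrt
        (Finset.single_le_sum (fun j _ => sq_nonneg (pbar j)) (Finset.mem_univ i))
  -- p̄ is feasible at x + c·1
  have hfeas : ∀ x : Fin d → ℝ, 0 ≤ x →
      pbar ∈ {p : Fin d → ℝ | 0 ≤ p ∧ p ≤ pbar ∧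
        p ≤ pimat.transpose.mulVec p + (x + fun _ => c)} := by
    intro x hx
    refine ⟨fun i => (hpbar i).le, le_refl _, fun i => ?_⟩
    have h1 : 0 ≤ pimat.transpose.mulVec pbar i := by
      simp only [Matrix.mulVec, dotProduct, Matrix.transpose_apply]
      exact Finset.sum_nonneg fun j _ => mul_nonneg (hpi0 j i) (hpbar j).le
    have h2 : (0:ℝ) ≤ x i := hx i
    have h3 := hcge i
    simp only [Pi.add_apply]
    linarith
  -- any feasible p (p ≤ pbar) has sum ≤ sum pbar
  have hub : ∀ p : Fin d → ℝ, p ≤ pbar → ∑ i, p i ≤ ∑ i, pbar i :=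
    fun p hp => Finset.sum_le_sum fun i _ => hp i
  -- Part 1
  have part1 : ∀ x : Fin d → ℝ, 0 ≤ x →
      lamEN pimat pbar (x + fun _ => c) = ∑ i, pbar i := by
    intro x hx
    apply IsGreatest.csSup_eq
    constructor
    · exact ⟨pbar, hfeas x hx, rfl⟩
    · rintro y ⟨p, ⟨_, hple, _⟩, rfl⟩
      exact hub p hple
  -- Part 2
  have part2 : ∀ x : Fin d → ℝ, 0 ≤ x → ∀ p : Fin d → ℝ,
      0 ≤ p → p ≤ pbar → p ≤ pimat.transpose.mulVec p + (x + fun _ => c) →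
      ∑ i, p i = ∑ i, pbar i → p = pbar := by
    intro x _ p _ hple _ hsum
    funext i
    exact (Finset.sum_eq_sum_iff_of_le (fun j _ => hple j)).mp hsum i (Finset.mem_univ i)
  -- Bᵀ(c·1) = c·1
  have hBz : B.transpose.mulVec (fun _ => c) = fun _ => c := by
    funext i
    obtain ⟨j0, hj0, huniq⟩ := hBcol i
    simp only [Matrix.mulVec, dotProduct, Matrix.transpose_apply]
    rw [Finset.sum_eq_single j0]
    · rw [hj0, one_mul]
    · intro j _ hne
      rcases hB01 j i with h | h
      · rw [h, zero_mul]
      · exact absurd (huniq j h) hne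
    · exact fun h => absurd (Finset.mem_univ j0) h
  have hXposnull : P {ω | ¬ 0 ≤ X ω} = 0 := by
    rw [← MeasureTheory.ae_iff] at *
    exact hXpos
  -- Part 3
  have part3 : α ≤ ∑ i, pbar i → (fun _ => c) ∈ REN P pimat pbar B X α lam := by
    intro hα'
    constructor
    · refine le_trans (le_trans (measure_mono ?_) hXposnull.le) zero_le
      intro ω hω
      simp only [Set.mem_setOf_eq] at hω ⊢
      intro hx
      have hx' : 0 ≤ X ω + B.transpose.mulVec (fun _ => c) := by
        rw [hBz]; intro i; simp only [Pi.add_apply, Pi.zero_apply]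
        have h4 : (0:ℝ) ≤ X ω i := hx i; linarith [hc0]
      rw [lamENb, if_pos hx', hBz, part1 (X ω) hx, WithBot.coe_lt_coe] at hω
      linarith
    · rw [← measure_univ (μ := P)]
      apply measure_congr
      rw [Filter.eventuallyEq_univ]
      filter_upwards [hXpos] with ω hω
      simp only [Set.mem_setOf_eq, hBz]
      intro i; simp only [Pi.add_apply, Pi.zero_apply]
      have h4 : (0:ℝ) ≤ X ω i := hω i; linarith [hc0]
  -- lamEN x ≤ ∑ pbar for 0 ≤ x
  have hle : ∀ x : Fin d → ℝ, 0 ≤ x → lamEN pimat pbar x ≤ ∑ i, pbar i := by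
    intro x hx
    apply csSup_le
    · refine ⟨∑ i, (0 : Fin d → ℝ) i, 0, ⟨le_refl _, fun i => (hpbar i).le, ?_⟩, rfl⟩
      rw [Matrix.mulVec_zero, zero_add]
      exact hx
    · rintro y ⟨p, ⟨_, hple, _⟩, rfl⟩
      exact hub p hple
  refine ⟨part1, part2, part3, ?_⟩
  constructor
  · rintro ⟨z, hz1, hz2⟩
    by_contra hcon
    push_neg at hcon
    have huniv : {ω | lamENb pimat pbar (X ω + B.transpose.mulVec z)
        < (α : WithBot ℝ)} = Set.univ := by
      ext ω
      simp only [Set.mem_setOf_eq, Set.mem_univ, iff_true]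
      by_cases hx : 0 ≤ X ω + B.transpose.mulVec z
      · rw [lamENb, if_pos hx, WithBot.coe_lt_coe]
        exact lt_of_le_of_lt (hle _ hx) hcon
      · rw [lamENb, if_neg hx]
        exact WithBot.bot_lt_coe α
    rw [huniv, measure_univ] at hz1
    exact absurd (lt_of_le_of_lt hz1 (ENNReal.ofReal_lt_one.mpr hlam1)) (lt_irrefl 1)
  · intro hα'
    exact ⟨_, part3 hα'⟩
end

section
/- Let z^UB ∈ ℝ^g be defined by z^UB_j := max{p̄ᵢ : B_{ji} = 1}. Then for every x ∈ ℝ^d₊ and every z ≥ z^LB (the componentwise lower bound ensuring x + Bᵀz ≥ 0), the Eisenberg–Noe aggregation satisfies Λ^EN(x + Bᵀz) = Λ^EN(x + Bᵀ(z ∧ z^UB)); consequently R^EN_{α,λ}(X) = (R^EN_{α,λ}(X) ∩ [z^LB, z^UB]) + ℝ^g₊ (Motzkin decomposition with compact part). -/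
open MeasureTheory Classical Pointwise

lemma feasSet_subset {d : ℕ} (pimat : Matrix (Fin d) (Fin d) ℝ)
    (hpi0 : ∀ i j, 0 ≤ pimat i j) (pbar : Fin d → ℝ) {x x' : Fin d → ℝ}
    (h : ∀ i, x i = x' i ∨ (pbar i ≤ x i ∧ pbar i ≤ x' i)) :
    {p : Fin d → ℝ | 0 ≤ p ∧ p ≤ pbar ∧ p ≤ pimat.transpose.mulVec p + x} ⊆
      {p : Fin d → ℝ | 0 ≤ p ∧ p ≤ pbar ∧ p ≤ pimat.transpose.mulVec p + x'} := by
  rintro p ⟨hp0, hp1, hp2⟩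
  refine ⟨hp0, hp1, fun i => ?_⟩
  have hnn : 0 ≤ pimat.transpose.mulVec p i := by
    simp only [Matrix.mulVec, dotProduct, Matrix.transpose_apply]
    exact Finset.sum_nonneg fun j _ => mul_nonneg (hpi0 j i) (hp0 j)
  rcases h i with heq | ⟨h1, h2⟩
  · have := hp2 i
    simp only [Pi.add_apply] at this ⊢
    linarith [this, heq.symm ▸ this]
  · have := hp1 i
    simp only [Pi.add_apply]
    linarith

lemma lamEN_congr {d : ℕ} (pimat : Matrix (Fin d) (Fin d) ℝ)
    (hpi0 : ∀ i j, 0 ≤ pimat i j) (pbar : Fin d → ℝ) {x x' : Fin d → ℝ}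
    (h : ∀ i, x i = x' i ∨ (pbar i ≤ x i ∧ pbar i ≤ x' i)) :
    lamEN pimat pbar x = lamEN pimat pbar x' := by
  unfold lamEN
  congr 1
  apply congrArg
  apply Set.Subset.antisymm (feasSet_subset pimat hpi0 pbar h)
  apply feasSet_subset pimat hpi0 pbar
  intro i
  rcases h i with heq | ⟨h1, h2⟩
  · exact Or.inl heq.symm
  · exact Or.inr ⟨h2, h1⟩

lemma lamEN_mono {d : ℕ} (pimat : Matrix (Fin d) (Fin d) ℝ) (pbar : Fin d → ℝ)
    (hpbar : ∀ i, 0 ≤ pbar i) {x x' : Fin d → ℝ} (hx : 0 ≤ x) (hxx : x ≤ x') :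
    lamEN pimat pbar x ≤ lamEN pimat pbar x' := by
  apply csSup_le_csSup
  · refine ⟨∑ i, pbar i, ?_⟩
    rintro s ⟨p, ⟨_, hp2, _⟩, rfl⟩
    exact Finset.sum_le_sum fun i _ => hp2 i
  · refine ⟨0, ⟨0, ⟨le_refl 0, fun i => hpbar i, fun i => ?_⟩, by simp⟩⟩
    simp only [Matrix.mulVec_zero, Pi.add_apply, Pi.zero_apply, zero_add]
    exact hx i
  · apply Set.image_mono
    rintro p ⟨hp0, hp1, hp2⟩
    refine ⟨hp0, hp1, fun i => le_trans (hp2 i) ?_⟩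
    simp only [Pi.add_apply]
    exact add_le_add_right (hxx i) _

/-- With `z^UB_j = max {p̄ᵢ : B_{ji} = 1}`, the Eisenberg–Noe aggregation satisfies
`Λ^EN(x + Bᵀz) = Λ^EN(x + Bᵀ(z ∧ z^UB))`, and consequently
`R^EN_{α,λ}(X) = (R^EN_{α,λ}(X) ∩ [z^LB, z^UB]) + ℝ^g₊` (Motzkin decomposition). -/
theorem stmt18 {Ω : Type*} [MeasurableSpace Ω] (P : Measure Ω) [IsProbabilityMeasure P]
    {d g : ℕ} (pimat : Matrix (Fin d) (Fin d) ℝ)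
    (hpi0 : ∀ i j, 0 ≤ pimat i j) (hpi1 : ∀ i, ∑ j, pimat i j = 1)
    (hpid : ∀ i, pimat i i = 0)
    (pbar : Fin d → ℝ) (hpbar : ∀ i, 0 < pbar i)
    (B : Matrix (Fin g) (Fin d) ℝ)
    (hB01 : ∀ j i, B j i = 0 ∨ B j i = 1)
    (hBcol : ∀ i, ∃! j, B j i = 1)
    (hBrow : ∀ j, ∃ i, B j i = 1)
    (X : Ω → Fin d → ℝ) (hX : Measurable X) (hXpos : ∀ᵐ ω ∂P, 0 ≤ X ω)
    (α lam : ℝ) (hα : 0 < α) (hlam0 : 0 < lam) (hlam1 : lam < 1)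
    (zUB : Fin g → ℝ)
    (hzUB : ∀ j, (∀ i, B j i = 1 → pbar i ≤ zUB j) ∧ ∃ i, B j i = 1 ∧ zUB j = pbar i)
    (zLB : Fin g → ℝ)
    (hzLB : ∀ z : Fin g → ℝ,
      (∀ᵐ ω ∂P, 0 ≤ X ω + B.transpose.mulVec z) ↔ zLB ≤ z) :
    (∀ x : Fin d → ℝ, 0 ≤ x → ∀ z : Fin g → ℝ, 0 ≤ x + B.transpose.mulVec z →
        lamEN pimat pbar (x + B.transpose.mulVec z)
          = lamEN pimat pbar (x + B.transpose.mulVec (z ⊓ zUB))) ∧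
    REN P pimat pbar B X α lam
      = (REN P pimat pbar B X α lam ∩ Set.Icc zLB zUB) + {y : Fin g → ℝ | 0 ≤ y} := by
  -- the group map: each i belongs to a unique group
  have hgrp : ∀ i : Fin d, ∃ j : Fin g, B j i = 1 ∧
      ∀ z : Fin g → ℝ, B.transpose.mulVec z i = z j := by
    intro i
    obtain ⟨j, hj, huniq⟩ := hBcol i
    refine ⟨j, hj, fun z => ?_⟩
    simp only [Matrix.mulVec, dotProduct, Matrix.transpose_apply]
    rw [Finset.sum_eq_single j]
    · rw [hj, one_mul]
    · intro k _ hk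
      rcases hB01 k i with h0 | h1
      · rw [h0, zero_mul]
      · exact absurd (huniq k h1) hk
    · intro h; exact absurd (Finset.mem_univ j) h
  choose grp hgrp1 hgrp2 using hgrp
  -- part 1
  have part1 : ∀ x : Fin d → ℝ, 0 ≤ x → ∀ z : Fin g → ℝ,
      0 ≤ x + B.transpose.mulVec z →
      lamEN pimat pbar (x + B.transpose.mulVec z)
        = lamEN pimat pbar (x + B.transpose.mulVec (z ⊓ zUB)) := by
    intro x hx z _
    apply lamEN_congr pimat hpi0 pbar
    intro i
    have hUB : pbar i ≤ zUB (grp i) := (hzUB (grp i)).1 i (hgrp1 i)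
    simp only [Pi.add_apply, hgrp2, Pi.inf_apply]
    rcases le_or_gt (z (grp i)) (zUB (grp i)) with hle | hlt
    · left
      rw [min_eq_left hle]
    · right
      have hxi : (0:ℝ) ≤ x i := hx i
      constructor
      · linarith
      · rw [min_eq_right hlt.le]
        linarith
  refine ⟨part1, ?_⟩
  -- measurability of the nonnegativity sets
  have hmeas : ∀ c : Fin d → ℝ, MeasurableSet {ω | 0 ≤ X ω + c} := by
    intro c
    have : {ω | 0 ≤ X ω + c} = ⋂ i, {ω | 0 ≤ X ω i + c i} := by
      ext ω
      simp [Pi.le_def]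
    rw [this]
    exact MeasurableSet.iInter fun i =>
      measurableSet_le measurable_const (((measurable_pi_apply i).comp hX).add_const _)
  have hprob : ∀ c : Fin d → ℝ,
      P {ω | 0 ≤ X ω + c} = 1 ↔ ∀ᵐ ω ∂P, 0 ≤ X ω + c := by
    intro c
    rw [← prob_compl_eq_zero_iff (hmeas c), ae_iff]
    rfl
  -- nonnegativity of Bᵀy for y ≥ 0
  have hBnn : ∀ y : Fin g → ℝ, 0 ≤ y → 0 ≤ B.transpose.mulVec y := by
    intro y hy i
    simp only [Pi.zero_apply, hgrp2]
    exact hy (grp i)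
  ext z
  simp only [Set.mem_add, Set.mem_inter_iff, Set.mem_Icc, Set.mem_setOf_eq]
  constructor
  · rintro hz
    obtain ⟨hz1, hz2⟩ := hz
    have haez : ∀ᵐ ω ∂P, 0 ≤ X ω + B.transpose.mulVec z := (hprob _).mp hz2
    set a := z ⊓ zUB with ha
    have haea : ∀ᵐ ω ∂P, 0 ≤ X ω + B.transpose.mulVec a := by
      filter_upwards [hXpos, haez] with ω h0 h1
      intro i
      have hUB : pbar i ≤ zUB (grp i) := (hzUB (grp i)).1 i (hgrp1 i)
      have h1i := h1 i
      have h0i := h0 i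
      simp only [Pi.add_apply, hgrp2, Pi.zero_apply] at h1i h0i ⊢
      simp only [ha, Pi.inf_apply]
      rcases le_or_gt (z (grp i)) (zUB (grp i)) with hle | hlt
      · rw [min_eq_left hle]; exact h1i
      · rw [min_eq_right hlt.le]
        have := hpbar i
        linarith
    have hzLBa : zLB ≤ a := (hzLB a).mp haea
    refine ⟨a, ⟨⟨?_, (hprob _).mpr haea⟩, hzLBa, inf_le_right⟩, z - a, ?_, by abel⟩
    · -- first REN condition for a
      have heq : {ω | lamENb pimat pbar (X ω + B.transpose.mulVec a) < (α : WithBot ℝ)}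
          =ᵐ[P] {ω | lamENb pimat pbar (X ω + B.transpose.mulVec z) < (α : WithBot ℝ)} := by
        rw [Filter.eventuallyEq_set]
        filter_upwards [hXpos, haez, haea] with ω h0 h1 h2
        have hval : lamENb pimat pbar (X ω + B.transpose.mulVec a)
            = lamENb pimat pbar (X ω + B.transpose.mulVec z) := by
          rw [lamENb, lamENb, if_pos h2, if_pos h1, part1 (X ω) h0 z h1]
        simp only [Set.mem_setOf_eq, hval]
      rw [measure_congr heq]
      exact hz1
    · intro j
      simp only [Pi.sub_apply, Pi.zero_apply, sub_nonneg]
      exact inf_le_left (b := zUB) j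
  · rintro ⟨a, ⟨⟨ha1, ha2⟩, hLBa, hUBa⟩, y, hy, hsum⟩
    have haa : ∀ᵐ ω ∂P, 0 ≤ X ω + B.transpose.mulVec a := (hprob _).mp ha2
    have hzay : z = a + y := hsum.symm
    have hle : ∀ ω, X ω + B.transpose.mulVec a ≤ X ω + B.transpose.mulVec z := by
      intro ω
      rw [hzay, Matrix.mulVec_add]
      intro i
      simp only [Pi.add_apply]
      have := hBnn y hy i
      simp only [Pi.zero_apply] at this
      linarith
    have haez : ∀ᵐ ω ∂P, 0 ≤ X ω + B.transpose.mulVec z := by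
      filter_upwards [haa] with ω h1
      exact le_trans h1 (hle ω)
    constructor
    · refine le_trans (measure_mono_ae ?_) ha1
      filter_upwards [haa, haez] with ω h1 h2
      intro hmem
      have e1 : lamENb pimat pbar (X ω + B.transpose.mulVec a)
          = ((lamEN pimat pbar (X ω + B.transpose.mulVec a) : ℝ) : WithBot ℝ) := by
        rw [lamENb, if_pos h1]
      have e2 : lamENb pimat pbar (X ω + B.transpose.mulVec z)
          = ((lamEN pimat pbar (X ω + B.transpose.mulVec z) : ℝ) : WithBot ℝ) := by
        rw [lamENb, if_pos h2]
      have hmem' : lamENb pimat pbar (X ω + B.transpose.mulVec z) < (α : WithBot ℝ) := hmem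
      show lamENb pimat pbar (X ω + B.transpose.mulVec a) < (α : WithBot ℝ)
      rw [e2] at hmem'
      rw [e1]
      have hm := lamEN_mono pimat pbar (fun i => (hpbar i).le) h1 (hle ω)
      exact lt_of_le_of_lt (WithBot.coe_le_coe.mpr hm) hmem'
    · exact (hprob _).mpr haez
end

section
/- For sample points x¹,…,x^N ∈ ℝ^d, the empirical sensitive systemic value-at-risk for the Eisenberg–Noe model admits the mixed-integer reformulation: R^{EN,N}_{α,λ}(x¹,…,x^N) := {z ∈ ℝ^g : (1/N)∑ₙ 1{Λ^EN(xⁿ + Bᵀz) < α} ≤ λ, xⁿ + Bᵀz ≥ 0 for all n} equals the set of z ∈ ℝ^g for which there exist pⁿ ∈ [0, p̄] and yⁿ ∈ {0,1}, n = 1,…,N, with ∑ₙ yⁿ ≥ N(1 − λ), 1ᵀpⁿ ≥ α yⁿ, xⁿ + Bᵀz ≥ 0, and pⁿ ≤ πᵀpⁿ + xⁿ + Bᵀz for all n. -/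
lemma lamEN_max {d : ℕ} (pimat : Matrix (Fin d) (Fin d) ℝ) (pbar : Fin d → ℝ)
    (hpbar : ∀ i, 0 ≤ pbar i) (x : Fin d → ℝ) (hx : 0 ≤ x) :
    ∃ p : Fin d → ℝ, (0 ≤ p ∧ p ≤ pbar ∧ p ≤ pimat.transpose.mulVec p + x) ∧
      lamEN pimat pbar x = ∑ i, p i ∧
      ∀ q : Fin d → ℝ, (0 ≤ q ∧ q ≤ pbar ∧ q ≤ pimat.transpose.mulVec q + x) →
        ∑ i, q i ≤ ∑ i, p i := by
  set S := {p : Fin d → ℝ | 0 ≤ p ∧ p ≤ pbar ∧ p ≤ pimat.transpose.mulVec p + x} with hS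
  have h0 : (0 : Fin d → ℝ) ∈ S := by
    refine ⟨le_refl _, fun i => hpbar i, fun i => ?_⟩
    simpa [Matrix.mulVec, dotProduct] using hx i
  have hclosed : IsClosed S := by
    have hSeq : S = ⋂ i, ({p : Fin d → ℝ | 0 ≤ p i} ∩ {p | p i ≤ pbar i} ∩
        {p | p i ≤ pimat.transpose.mulVec p i + x i}) := by
      ext p
      simp only [hS, Set.mem_setOf_eq, Set.mem_iInter, Set.mem_inter_iff, Pi.le_def,
        Pi.add_apply, Pi.zero_apply]
      exact ⟨fun h i => ⟨⟨h.1 i, h.2.1 i⟩, h.2.2 i⟩,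
        fun h => ⟨fun i => (h i).1.1, fun i => (h i).1.2, fun i => (h i).2⟩⟩
    rw [hSeq]
    refine isClosed_iInter fun i => (((isClosed_le continuous_const (continuous_apply i)).inter
      (isClosed_le (continuous_apply i) continuous_const)).inter
      (isClosed_le (continuous_apply i) ?_))
    refine Continuous.add ?_ continuous_const
    simp only [Matrix.mulVec, dotProduct]
    exact continuous_finset_sum _ fun j _ => continuous_const.mul (continuous_apply j)
  have hcompact : IsCompact S := by
    refine IsCompact.of_isClosed_subset (isCompact_Icc (a := (0 : Fin d → ℝ)) (b := pbar))
      hclosed fun p hp => ⟨hp.1, hp.2.1⟩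
  have hcont : Continuous fun p : Fin d → ℝ => ∑ i, p i :=
    continuous_finset_sum _ fun i _ => continuous_apply i
  obtain ⟨p, hpS, hpmax⟩ := hcompact.exists_isMaxOn ⟨0, h0⟩ hcont.continuousOn
  refine ⟨p, hpS, ?_, fun q hq => hpmax hq⟩
  have : IsGreatest ((fun p : Fin d → ℝ => ∑ i, p i) '' S) (∑ i, p i) := by
    refine ⟨⟨p, hpS, rfl⟩, ?_⟩
    rintro _ ⟨q, hq, rfl⟩
    exact hpmax hq
  exact this.csSup_eq

/-- Mixed-integer reformulation of the empirical sensitive systemic value-at-risk for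
the Eisenberg–Noe model. -/
theorem stmt19 {d g N : ℕ} [NeZero N] (pimat : Matrix (Fin d) (Fin d) ℝ)
    (hpi0 : ∀ i j, 0 ≤ pimat i j) (hpi1 : ∀ i, ∑ j, pimat i j = 1)
    (hpid : ∀ i, pimat i i = 0)
    (pbar : Fin d → ℝ) (hpbar : ∀ i, 0 < pbar i)
    (B : Matrix (Fin g) (Fin d) ℝ)
    (hB01 : ∀ j i, B j i = 0 ∨ B j i = 1)
    (hBcol : ∀ i, ∃! j, B j i = 1)
    (α lam : ℝ) (hα : 0 < α) (hlam0 : 0 < lam) (hlam1 : lam < 1)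
    (x : Fin N → Fin d → ℝ) :
    {z : Fin g → ℝ |
        (1 / (N : ℝ)) * ∑ n : Fin N,
            (if lamEN pimat pbar (x n + B.transpose.mulVec z) < α then (1 : ℝ) else 0)
          ≤ lam ∧
        ∀ n, 0 ≤ x n + B.transpose.mulVec z} =
    {z : Fin g → ℝ | ∃ p : Fin N → Fin d → ℝ, ∃ y : Fin N → ℝ,
        (∀ n, y n = 0 ∨ y n = 1) ∧
        (N : ℝ) * (1 - lam) ≤ ∑ n : Fin N, y n ∧
        ∀ n, α * y n ≤ ∑ i, p n i ∧
          0 ≤ x n + B.transpose.mulVec z ∧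
          0 ≤ p n ∧ p n ≤ pbar ∧
          p n ≤ pimat.transpose.mulVec (p n) + x n + B.transpose.mulVec z} := by
  have hN : (0 : ℝ) < N := Nat.cast_pos.mpr (Nat.pos_of_ne_zero (NeZero.ne N))
  have hpbar' : ∀ i, 0 ≤ pbar i := fun i => (hpbar i).le
  ext z
  simp only [Set.mem_setOf_eq]
  constructor
  · rintro ⟨hsum, hnn⟩
    choose P hP hPval hPmax using fun n =>
      lamEN_max pimat pbar hpbar' (x n + B.transpose.mulVec z) (hnn n)
    refine ⟨fun n => if lamEN pimat pbar (x n + B.transpose.mulVec z) < α then 0 else P n,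
      fun n => if lamEN pimat pbar (x n + B.transpose.mulVec z) < α then 0 else 1,
      fun n => by dsimp only; split <;> simp, ?_, fun n => ?_⟩
    · have key : ∑ n : Fin N,
          (if lamEN pimat pbar (x n + B.transpose.mulVec z) < α then (1:ℝ) else 0) ≤ N * lam := by
        rw [div_mul_eq_mul_div, one_mul, div_le_iff₀ hN] at hsum
        linarith [hsum]
      have : ∑ n : Fin N,
          (if lamEN pimat pbar (x n + B.transpose.mulVec z) < α then (0:ℝ) else 1) =
          N - ∑ n : Fin N,
          (if lamEN pimat pbar (x n + B.transpose.mulVec z) < α then (1:ℝ) else 0) := by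
        rw [eq_sub_iff_add_eq, ← Finset.sum_add_distrib]
        have : ∀ n : Fin N,
            (if lamEN pimat pbar (x n + B.transpose.mulVec z) < α then (0:ℝ) else 1) +
            (if lamEN pimat pbar (x n + B.transpose.mulVec z) < α then (1:ℝ) else 0) = 1 := by
          intro n; split <;> ring
        rw [Finset.sum_congr rfl fun n _ => this n]
        simp
      rw [this]
      nlinarith [key]
    · by_cases h : lamEN pimat pbar (x n + B.transpose.mulVec z) < α
      · simp only [h, if_pos]
        refine ⟨by simp, hnn n, le_refl _, fun i => hpbar' i, ?_⟩
        rw [Matrix.mulVec_zero, zero_add]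
        exact hnn n
      · simp only [h, if_neg, if_false]
        obtain ⟨h1, h2, h3⟩ := hP n
        refine ⟨?_, hnn n, h1, h2, ?_⟩
        · rw [mul_one, ← hPval n]; exact le_of_not_gt h
        · rw [add_assoc]; exact h3
  · rintro ⟨p, y, hy01, hysum, hcons⟩
    refine ⟨?_, fun n => (hcons n).2.1⟩
    have hind : ∀ n : Fin N,
        (if lamEN pimat pbar (x n + B.transpose.mulVec z) < α then (1:ℝ) else 0) ≤ 1 - y n := by
      intro n
      rcases hy01 n with h0 | h1
      · rw [h0]; split <;> norm_num
      · rw [h1]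
        have hfeas : 0 ≤ p n ∧ p n ≤ pbar ∧
            p n ≤ pimat.transpose.mulVec (p n) + (x n + B.transpose.mulVec z) := by
          obtain ⟨_, _, h3, h4, h5⟩ := hcons n
          exact ⟨h3, h4, by rw [← add_assoc]; exact h5⟩
        obtain ⟨P, hPS, hPval, hPmax⟩ :=
          lamEN_max pimat pbar hpbar' (x n + B.transpose.mulVec z) ((hcons n).2.1)
        have : α ≤ lamEN pimat pbar (x n + B.transpose.mulVec z) := by
          rw [hPval]
          have h1' := (hcons n).1
          rw [h1, mul_one] at h1'
          exact le_trans h1' (hPmax _ hfeas)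
        rw [if_neg (not_lt.mpr this)]
        norm_num
    have : ∑ n : Fin N,
        (if lamEN pimat pbar (x n + B.transpose.mulVec z) < α then (1:ℝ) else 0) ≤
        ∑ n : Fin N, (1 - y n) := Finset.sum_le_sum fun n _ => hind n
    rw [Finset.sum_sub_distrib] at this
    simp only [Finset.sum_const, Finset.card_univ, Fintype.card_fin, nsmul_eq_mul, mul_one] at this
    rw [div_mul_eq_mul_div, div_le_iff₀ hN, one_mul]
    nlinarith [this, hysum]
end
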